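/- Let P, K be positive integers, let v_1, …, v_K ∈ ℂ^P, let C be a P×P Hermitian positive definite complex matrix, and let Γ be a Hermitian matrix lying in the real span of {v_k v_k^H : k = 1, …, K}. If v_k^H C^{-1} Γ C^{-1} v_k = 0 for every k = 1, …, K, then Γ = 0. -/

import Mathlib

open Matrix
open scoped ComplexOrder

/-- The rank-one Hermitian matrix `v vᴴ` formed from a vector `v ∈ ℂ^P`. -/
noncomputable def outer {P : ℕ} (v : Fin P → ℂ) : Matrix (Fin P) (Fin P) ℂ :=
  Matrix.of fun p q => v p * star (v q)

lemma trace_mul_outer {P : ℕ} (A : Matrix (Fin P) (Fin P) ℂ) (w : Fin P → ℂ) :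
    (A * outer w).trace = star w ⬝ᵥ (A *ᵥ w) := by
  unfold outer
  simp only [Matrix.trace, Matrix.diag, Matrix.mul_apply, dotProduct, Matrix.mulVec,
    Matrix.of_apply, Pi.star_apply, Finset.mul_sum]
  exact Finset.sum_congr rfl fun p _ => Finset.sum_congr rfl fun q _ => by ring

lemma eq_zero_of_trace_conjTranspose_mul_self {P : ℕ} (M : Matrix (Fin P) (Fin P) ℂ)
    (h : (Mᴴ * M).trace = 0) : M = 0 := by
  have h2 : (∑ j, ∑ i, (Complex.normSq (M i j) : ℂ)) = 0 := by
    rw [← h]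
    simp only [Matrix.trace, Matrix.diag, Matrix.mul_apply, Matrix.conjTranspose_apply]
    exact Finset.sum_congr rfl fun j _ => Finset.sum_congr rfl fun i _ => by
      rw [Complex.normSq_eq_conj_mul_self]; rfl
  have h3 : (∑ j : Fin P, ∑ i : Fin P, Complex.normSq (M i j)) = 0 := by
    have := h2
    push_cast at this
    exact_mod_cast this
  ext i j
  have hnn : ∀ j ∈ Finset.univ, (0:ℝ) ≤ ∑ i : Fin P, Complex.normSq (M i j) :=
    fun j _ => Finset.sum_nonneg fun i _ => Complex.normSq_nonneg _
  have h4 := (Finset.sum_eq_zero_iff_of_nonneg hnn).mp h3 j (Finset.mem_univ j)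
  have h5 := (Finset.sum_eq_zero_iff_of_nonneg
    (fun i _ => Complex.normSq_nonneg (M i j))).mp h4 i (Finset.mem_univ i)
  simpa using Complex.normSq_eq_zero.mp h5

/-- If a Hermitian matrix `Γ` in the real span of `{v_k v_kᴴ}`
is orthogonal to every `v_k v_kᴴ` in the `C⁻¹`-weighted inner product, then `Γ = 0`. -/
theorem stmt_2 (P K : ℕ) (hP : 0 < P) (hK : 0 < K)
    (v : Fin K → Fin P → ℂ)
    (C : Matrix (Fin P) (Fin P) ℂ) (hCpd : C.PosDef)
    (Γ : Matrix (Fin P) (Fin P) ℂ) (hΓherm : Γ.IsHermitian)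
    (hΓspan : ∃ c : Fin K → ℝ, Γ = ∑ k, (c k : ℂ) • outer (v k))
    (horth : ∀ k, star (v k) ⬝ᵥ ((C⁻¹ * Γ * C⁻¹) *ᵥ v k) = 0) :
    Γ = 0 := by
  obtain ⟨c, hc⟩ := hΓspan
  set B := C⁻¹ with hBdef
  have hB : B.PosDef := hCpd.inv
  set S := (open scoped MatrixOrder in CFC.sqrt B) with hSdef
  have hSS : S * S = B := open scoped MatrixOrder in CFC.sqrt_mul_sqrt_self B hB.posSemidef.nonneg
  have hSherm : Sᴴ = S := open scoped MatrixOrder in (CFC.sqrt_nonneg B).posSemidef.isHermitian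
  -- the key trace computation
  have htr : ((B * Γ * B) * Γ).trace = 0 := by
    nth_rewrite 2 [hc]
    rw [Finset.mul_sum, Matrix.trace_sum]
    refine Finset.sum_eq_zero fun k _ => ?_
    rw [Matrix.mul_smul, Matrix.trace_smul, trace_mul_outer, horth k, smul_zero]
  set M := S * Γ * S with hMdef
  have hMH : Mᴴ = M := by
    rw [hMdef, Matrix.conjTranspose_mul, Matrix.conjTranspose_mul, hSherm, hΓherm.eq,
      Matrix.mul_assoc]
  have hMtr : (Mᴴ * M).trace = 0 := by
    rw [hMH, hMdef]
    have : (S * Γ * S) * (S * Γ * S) = S * (Γ * B * Γ * S) := by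
      rw [← hSS]; noncomm_ring
    rw [this, Matrix.trace_mul_comm]
    have h7 : Γ * B * Γ * S * S = Γ * (B * Γ * B) := by rw [← hSS]; noncomm_ring
    rw [h7, Matrix.trace_mul_comm Γ (B * Γ * B)]
    exact htr
  have hM0 : M = 0 := eq_zero_of_trace_conjTranspose_mul_self M hMtr
  -- S is invertible
  have hdetB : B.det ≠ 0 := hB.det_pos.ne'
  have hdetS : IsUnit S.det := by
    rw [isUnit_iff_ne_zero]
    intro h
    rw [← hSS, Matrix.det_mul, h, mul_zero] at hdetB
    exact hdetB rfl
  have : Γ = S⁻¹ * M * S⁻¹ := by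
    rw [hMdef]
    rw [show S⁻¹ * (S * Γ * S) * S⁻¹ = (S⁻¹ * S) * Γ * (S * S⁻¹) by noncomm_ring,
      Matrix.nonsing_inv_mul _ hdetS, Matrix.mul_nonsing_inv _ hdetS, one_mul, mul_one]
  rw [this, hM0, Matrix.mul_zero, Matrix.zero_mul]
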